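/- Let p be a prime, q > 1 a power of p, and k ≥ 2, m ≥ 1 integers. Let V ∈ M_{k+p^m−1}(𝔽_q[[t]]) be any glissando matrix such that every entry of U^{(k+p^m)} − V is divisible by t^{p^m}. Write det(I − X·U^{(k+p^m)}) = Σ_n a_n^{(k+p^m)} X^n and det(I − X·V) = Σ_n ã_n X^n. Then for every integer n with 0 ≤ n ≤ k+p^m−1, one has v_t(a_n^{(k+p^m)} − ã_n) ≥ p^m + Σ_{l=1}^{n−1} min(l−1, p^m), where v_t is the t-adic valuation on 𝔽_q[[t]] with v_t(t) = 1 and v_t(0) = +∞. -/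

import Mathlib

open Polynomial

noncomputable section DrinfeldGM

/-- Integer-argument binomial coefficient `C(c,d)`, equal to `0` whenever any of
`c`, `d`, `c - d` is negative. -/
def intChoose (c d : ℤ) : ℤ :=
  if 0 ≤ c ∧ 0 ≤ d ∧ d ≤ c then (Nat.choose c.toNat d.toNat : ℤ) else 0

/-- The `(i,j)` entry of the matrix of the `U`-operator on `S_k(Γ₁(t))` in the
Bandini–Valentino basis (here `t` is the polynomial variable `X`).  For `i = j` it is
`(-t)^j C(k-2-j, j)`; for `i = j + h(q-1)` with `h ≠ 0` (equivalently `(q-1) ∣ i - j`,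
`i ≠ j`, in which case `h(q-1) = i - j`) it is
`-t^j (C(k-2-i, j-i) + (-1)^{j+1} C(k-2-i, j))`; and it is `0` otherwise. -/
def Uent (F : Type*) [Field F] (q k : ℕ) (i j : ℕ) : Polynomial F :=
  if i = j then
    (-Polynomial.X : Polynomial F) ^ j * ((intChoose ((k : ℤ) - 2 - (j : ℤ)) (j : ℤ) : ℤ) : Polynomial F)
  else if ((q : ℤ) - 1) ∣ ((i : ℤ) - (j : ℤ)) then
    -((Polynomial.X : Polynomial F) ^ j *
      ((intChoose ((k : ℤ) - 2 - (i : ℤ)) ((j : ℤ) - (i : ℤ)) +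
        (-1) ^ (j + 1) * intChoose ((k : ℤ) - 2 - (i : ℤ)) (j : ℤ) : ℤ) : Polynomial F))
  else 0

/-- The representing matrix `U^{(k)} ∈ M_{k-1}(𝔽_q[t])` of the `U`-operator on
`S_k(Γ₁(t))`, rows and columns indexed by `0, …, k-2`. -/
def Umat (F : Type*) [Field F] (q k : ℕ) :
    Matrix (Fin (k - 1)) (Fin (k - 1)) (Polynomial F) :=
  Matrix.of fun i j => Uent F q k (i : ℕ) (j : ℕ)

/-- A matrix over `𝔽_q[[t]]` is *glissando* if every entry of its `j`-th column is an
`𝔽_q`-multiple of `t^j`. -/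
def Glissando {F : Type*} [Field F] {m n : ℕ}
    (B : Matrix (Fin m) (Fin n) (PowerSeries F)) : Prop :=
  ∀ i j, ∃ c : F, B i j = PowerSeries.C c * (PowerSeries.X : PowerSeries F) ^ (j : ℕ)

/-- The inclusion `𝔽_q[t] → 𝔽_q[[t]]`. -/
def polyToPS (F : Type*) [Field F] : Polynomial F →+* PowerSeries F :=
  Polynomial.coeToPowerSeries.ringHom

/-- The inclusion of `𝔽_q[[t]]` into a fixed algebraic closure `K̄` of `K = 𝔽_q((t))`. -/
def psToKbar (F : Type*) [Field F] :
    PowerSeries F →+* AlgebraicClosure (LaurentSeries F) :=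
  (algebraMap (LaurentSeries F) (AlgebraicClosure (LaurentSeries F))).comp
    (algebraMap (PowerSeries F) (LaurentSeries F))

/-- The inclusion `𝔽_q[t] → K̄`. -/
def polyToKbar (F : Type*) [Field F] :
    Polynomial F →+* AlgebraicClosure (LaurentSeries F) :=
  (psToKbar F).comp (polyToPS F)

/-- The element `t` of `K̄`. -/
def tbar (F : Type*) [Field F] : AlgebraicClosure (LaurentSeries F) :=
  psToKbar F PowerSeries.X

/-- Integrality over `𝔽_q[[t]]` of an element of `K̄`. -/
def IntegralPS (F : Type*) [Field F] (x : AlgebraicClosure (LaurentSeries F)) : Prop :=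
  letI : Algebra (PowerSeries F) (AlgebraicClosure (LaurentSeries F)) := (psToKbar F).toAlgebra
  IsIntegral (PowerSeries F) x

/-- `HasVal F λ α` says that `λ ∈ K̄` is nonzero and has valuation `α` for the unique
extension `v` to `K̄` of the `t`-adic valuation with `v(t) = 1`: writing `α = a/b` with
`b > 0`, this means that both `λ^b/t^a` and `t^a/λ^b` are integral over `𝔽_q[[t]]`. -/
def HasVal (F : Type*) [Field F] (lam : AlgebraicClosure (LaurentSeries F)) (α : ℚ) : Prop :=
  lam ≠ 0 ∧ ∃ a b : ℤ, 0 < b ∧ α = (a : ℚ) / (b : ℚ) ∧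
    IntegralPS F (lam ^ b / tbar F ^ a) ∧ IntegralPS F (tbar F ^ a / lam ^ b)

/-- `d(k, α)`: the number of roots `λ` of `det(X·I - U^{(k)})` in `K̄` with `v(λ) = α`,
counted with multiplicity.  This is the dimension of the slope-`α` generalized eigenspace
of the `U`-operator on `S_k(Γ₁(t))`. -/
def dDim (F : Type*) [Field F] (q k : ℕ) (α : ℚ) : ℕ :=
  letI := Classical.decPred fun lam : AlgebraicClosure (LaurentSeries F) => HasVal F lam α
  Multiset.card <| Multiset.filter (fun lam => HasVal F lam α) <|
    (((Umat F q k).charpoly).map (polyToKbar F)).roots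

/-- `det(I - t^l X B)` for a square matrix `B` over `𝔽_q[[t]]`, as a polynomial in `X`
over `𝔽_q[[t]]`. -/
def charSeriesTw (F : Type*) [Field F] {m : ℕ} (l : ℕ)
    (B : Matrix (Fin m) (Fin m) (PowerSeries F)) : Polynomial (PowerSeries F) :=
  Matrix.det (1 - (Polynomial.C ((PowerSeries.X : PowerSeries F) ^ l) * Polynomial.X) •
    B.map Polynomial.C)

/-- `det(I - X B)` for a square matrix `B` over `𝔽_q[[t]]`. -/
def charSeriesPS (F : Type*) [Field F] {m : ℕ}
    (B : Matrix (Fin m) (Fin m) (PowerSeries F)) : Polynomial (PowerSeries F) :=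
  Matrix.det (1 - (Polynomial.X : Polynomial (PowerSeries F)) • B.map Polynomial.C)

/-- `P^{(k)}(X) = det(I - X·U^{(k)}) ∈ 𝔽_q[t][X]`. -/
def Pser (F : Type*) [Field F] (q k : ℕ) : Polynomial (Polynomial F) :=
  Matrix.det (1 - (Polynomial.X : Polynomial (Polynomial F)) • (Umat F q k).map Polynomial.C)



/-! ### Auxiliary lemmas for the perturbation bound -/

private lemma tri_le (T : Finset ℕ) : ∑ i ∈ Finset.range T.card, i ≤ ∑ x ∈ T, x := by
  induction T using Finset.strongInduction with
  | _ T ih =>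
    rcases T.eq_empty_or_nonempty with rfl | hT
    · simp
    · have hmem : T.max' hT ∈ T := T.max'_mem hT
      have hcard : 1 ≤ T.card := Finset.card_pos.mpr hT
      have hsub : T ⊆ Finset.range (T.max' hT + 1) := fun x hx =>
        Finset.mem_range.mpr (Nat.lt_succ_of_le (Finset.le_max' T x hx))
      have hMb : T.card ≤ T.max' hT + 1 := by
        simpa using Finset.card_le_card hsub
      have hrec := ih (T.erase (T.max' hT)) (Finset.erase_ssubset hmem)
      rw [Finset.card_erase_of_mem hmem] at hrec
      have h1 : ∑ i ∈ Finset.range T.card, i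
          = (∑ i ∈ Finset.range (T.card - 1), i) + (T.card - 1) := by
        conv_lhs => rw [show T.card = (T.card - 1) + 1 from (Nat.succ_pred_eq_of_pos hcard).symm]
        rw [Finset.sum_range_succ]
      have h2 : (∑ x ∈ T.erase (T.max' hT), x) + T.max' hT = ∑ x ∈ T, x :=
        Finset.sum_erase_add T _ hmem
      omega

private lemma dvd_coeff_prod_linear {R : Type*} [CommRing R] {ι : Type*} [DecidableEq ι]
    (s : Finset ι) (b c : ι → R) (x : R) (n : ℕ)
    (h : ∀ S ∈ s.powerset, S.card = n → x ∣ (∏ j ∈ S, c j) * ∏ j ∈ s \ S, b j) :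
    x ∣ (∏ j ∈ s, (Polynomial.C (b j) + Polynomial.C (c j) * Polynomial.X)).coeff n := by
  have hrw : ∀ j ∈ s, Polynomial.C (b j) + Polynomial.C (c j) * Polynomial.X
      = Polynomial.C (c j) * Polynomial.X + Polynomial.C (b j) := fun j _ => add_comm _ _
  rw [Finset.prod_congr rfl hrw, Finset.prod_add, Polynomial.finset_sum_coeff]
  refine Finset.dvd_sum fun S hS => ?_
  have hterm : (∏ j ∈ S, Polynomial.C (c j) * Polynomial.X) * ∏ j ∈ s \ S, Polynomial.C (b j)
      = Polynomial.C ((∏ j ∈ S, c j) * ∏ j ∈ s \ S, b j) * Polynomial.X ^ S.card := by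
    rw [Finset.prod_mul_distrib, Finset.prod_const, map_mul, map_prod, map_prod]
    ring
  rw [hterm, Polynomial.coeff_C_mul, Polynomial.coeff_X_pow]
  by_cases hcard : n = S.card
  · rw [if_pos hcard, mul_one]
    exact h S hS hcard.symm
  · rw [if_neg hcard, mul_zero]
    exact dvd_zero _

private lemma det_coeff_dvd {R : Type*} [CommRing R] {N' : ℕ}
    (b c : Fin N' → Fin N' → R) (x : R) (j0 : Fin N') (e n : ℕ)
    (hb0 : ∀ i, b i j0 = 0)
    (hc : ∀ i j, j ≠ j0 → x ^ (j : ℕ) ∣ c i j)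
    (hc0 : ∀ i, x ^ e ∣ c i j0) :
    x ^ (e + ∑ i ∈ Finset.range (n - 1), i) ∣
      (Matrix.det (Matrix.of fun i j =>
        Polynomial.C (b i j) + Polynomial.C (c i j) * Polynomial.X)).coeff n := by
  classical
  rw [Matrix.det_apply, Polynomial.finset_sum_coeff]
  refine Finset.dvd_sum fun σ _ => ?_
  rw [Units.smul_def, Polynomial.coeff_smul, zsmul_eq_mul]
  refine Dvd.dvd.mul_left ?_ _
  have key := dvd_coeff_prod_linear (R := R) Finset.univ (fun j => b (σ j) j)
    (fun j => c (σ j) j) (x ^ (e + ∑ i ∈ Finset.range (n - 1), i)) n ?_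
  · simpa [Matrix.of_apply] using key
  intro S _ hScard
  by_cases hj0 : j0 ∈ S
  · have h1 : x ^ e ∣ c (σ j0) j0 := hc0 _
    have h2 : x ^ (∑ j ∈ S.erase j0, (j : ℕ)) ∣ ∏ j ∈ S.erase j0, c (σ j) j := by
      rw [← Finset.prod_pow_eq_pow_sum]
      exact Finset.prod_dvd_prod_of_dvd _ _ fun j hj =>
        hc (σ j) j (Finset.ne_of_mem_erase hj)
    have h3 : ∑ i ∈ Finset.range (n - 1), i ≤ ∑ j ∈ S.erase j0, (j : ℕ) := by
      have himg : ∑ y ∈ (S.erase j0).image Fin.val, y = ∑ j ∈ S.erase j0, (j : ℕ) :=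
        Finset.sum_image (fun a _ b _ h => Fin.val_injective h)
      have hcardi : ((S.erase j0).image Fin.val).card = n - 1 := by
        rw [Finset.card_image_of_injective _ Fin.val_injective,
          Finset.card_erase_of_mem hj0, hScard]
      calc ∑ i ∈ Finset.range (n - 1), i
          = ∑ i ∈ Finset.range ((S.erase j0).image Fin.val).card, i := by rw [hcardi]
        _ ≤ ∑ y ∈ (S.erase j0).image Fin.val, y := tri_le _
        _ = _ := himg
    calc x ^ (e + ∑ i ∈ Finset.range (n - 1), i)
        ∣ x ^ (e + ∑ j ∈ S.erase j0, (j : ℕ)) := pow_dvd_pow x (by omega)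
      _ = x ^ e * x ^ (∑ j ∈ S.erase j0, (j : ℕ)) := pow_add x _ _
      _ ∣ c (σ j0) j0 * ∏ j ∈ S.erase j0, c (σ j) j := mul_dvd_mul h1 h2
      _ = ∏ j ∈ S, c (σ j) j := Finset.mul_prod_erase S (fun j => c (σ j) j) hj0
      _ ∣ (∏ j ∈ S, c (σ j) j) * ∏ j ∈ Finset.univ \ S, b (σ j) j := dvd_mul_right _ _
  · have hmem : j0 ∈ Finset.univ \ S := Finset.mem_sdiff.mpr ⟨Finset.mem_univ _, hj0⟩
    have hzero : (∏ j ∈ Finset.univ \ S, b (σ j) j) = 0 :=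
      Finset.prod_eq_zero hmem (hb0 _)
    rw [hzero, mul_zero]
    exact dvd_zero _

private lemma Umat_X_pow_dvd (F : Type*) [Field F] (q k' : ℕ) (i j : Fin (k' - 1)) :
    (PowerSeries.X : PowerSeries F) ^ (j : ℕ) ∣ ((Umat F q k').map (polyToPS F)) i j := by
  have hpoly : (Polynomial.X : Polynomial F) ^ (j : ℕ) ∣ Uent F q k' i j := by
    unfold Uent
    split_ifs with h1 h2
    · have hneg : (Polynomial.X : Polynomial F) ^ (j : ℕ) ∣ (-Polynomial.X) ^ (j : ℕ) := by
        rw [neg_pow]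
        exact Dvd.intro_left _ rfl
      exact hneg.mul_right _
    · rw [dvd_neg]
      exact dvd_mul_right _ _
    · exact dvd_zero _
  have h2 := map_dvd (polyToPS F) hpoly
  rw [map_pow] at h2
  have hX : polyToPS F Polynomial.X = PowerSeries.X := by
    simp [polyToPS, Polynomial.coeToPowerSeries.ringHom_apply, Polynomial.coe_X]
  rw [hX] at h2
  simpa [Umat, Matrix.map_apply] using h2

private lemma one_sub_X_smul_apply {R : Type*} [CommRing R] {N' : ℕ} [DecidableEq (Fin N')]
    (M : Matrix (Fin N') (Fin N') R) (i j : Fin N') :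
    (1 - (Polynomial.X : Polynomial R) • M.map Polynomial.C) i j
      = Polynomial.C (if i = j then (1 : R) else 0) + Polynomial.C (-(M i j)) * Polynomial.X := by
  simp only [Matrix.sub_apply, Matrix.smul_apply, Matrix.map_apply, Matrix.one_apply,
    smul_eq_mul, map_neg]
  split_ifs with h <;> simp only [map_one, map_zero] <;> ring

/-- Perturbation bound: let `V` be any glissando matrix of size `k+p^m-1` over `𝔽_q[[t]]`
with all entries of `U^{(k+p^m)} - V` divisible by `t^{p^m}`, and write
`det(I - X·U^{(k+p^m)}) = Σ a_n X^n`, `det(I - X·V) = Σ ã_n X^n`.  Then for every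
`0 ≤ n ≤ k+p^m-1` one has `v_t(a_n - ã_n) ≥ p^m + Σ_{l=1}^{n-1} min(l-1, p^m)`. -/
theorem charSeries_perturbation_dvd
    (p q : ℕ) (hp : p.Prime) (hq : ∃ e : ℕ, 1 ≤ e ∧ q = p ^ e)
    (F : Type) [Field F] [Fintype F] (hF : Fintype.card F = q)
    (k m : ℕ) (hk : 2 ≤ k) (hm : 1 ≤ m)
    (V : Matrix (Fin (k + p ^ m - 1)) (Fin (k + p ^ m - 1)) (PowerSeries F))
    (hV : Glissando V)
    (hdvd : ∀ i j, (PowerSeries.X : PowerSeries F) ^ (p ^ m) ∣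
      (((Umat F q (k + p ^ m)).map (polyToPS F)) i j - V i j))
    (n : ℕ) (hn : n ≤ k + p ^ m - 1) :
    (PowerSeries.X : PowerSeries F) ^
        (p ^ m + ∑ l ∈ Finset.Icc 1 (n - 1), min (l - 1) (p ^ m)) ∣
      ((charSeriesPS F ((Umat F q (k + p ^ m)).map (polyToPS F))).coeff n -
        (charSeriesPS F V).coeff n) := by
  classical
  set MU : Matrix (Fin (k + p ^ m - 1)) (Fin (k + p ^ m - 1)) (PowerSeries F) :=
    (Umat F q (k + p ^ m)).map (polyToPS F) with hMUdef
  have hUdvd : ∀ i j : Fin (k + p ^ m - 1),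
      (PowerSeries.X : PowerSeries F) ^ (j : ℕ) ∣ MU i j :=
    fun i j => Umat_X_pow_dvd F q (k + p ^ m) i j
  have hVdvd : ∀ i j : Fin (k + p ^ m - 1),
      (PowerSeries.X : PowerSeries F) ^ (j : ℕ) ∣ V i j := by
    intro i j
    obtain ⟨cst, hcst⟩ := hV i j
    rw [hcst]
    exact Dvd.intro_left _ rfl
  set AU := (1 - (Polynomial.X : Polynomial (PowerSeries F)) • MU.map Polynomial.C) with hAU
  set AV := (1 - (Polynomial.X : Polynomial (PowerSeries F)) • V.map Polynomial.C) with hAV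
  have hcs1 : charSeriesPS F MU = AU.det := rfl
  have hcs2 : charSeriesPS F V = AV.det := rfl
  rw [hcs1, hcs2, ← Polynomial.coeff_sub]
  set H : ℕ → Matrix (Fin (k + p ^ m - 1)) (Fin (k + p ^ m - 1)) (Polynomial (PowerSeries F)) :=
    fun r => Matrix.of fun i j => if (j : ℕ) < r then AU i j else AV i j with hH
  have hH0 : H 0 = AV := by
    funext i j
    simp [hH, Matrix.of_apply]
  have hHN : H (k + p ^ m - 1) = AU := by
    funext i j
    simp [hH, Matrix.of_apply, j.isLt]
  have htel : AU.det - AV.det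
      = ∑ r ∈ Finset.range (k + p ^ m - 1), ((H (r + 1)).det - (H r).det) := by
    rw [Finset.sum_range_sub (fun r => (H r).det), hH0, hHN]
  rw [htel, Polynomial.finset_sum_coeff]
  refine Finset.dvd_sum fun r hr => ?_
  have hrN : r < k + p ^ m - 1 := Finset.mem_range.mp hr
  set j0 : Fin (k + p ^ m - 1) := ⟨r, hrN⟩ with hj0def
  have hup1 : H (r + 1) = (H r).updateCol j0 (fun i => AU i j0) := by
    funext i j
    rw [Matrix.updateCol_apply]
    by_cases hj : j = j0
    · subst hj
      simp [hH, Matrix.of_apply, Nat.lt_succ_self, hj0def]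
    · rw [if_neg hj]
      have hjr : (j : ℕ) ≠ r := fun hh => hj (Fin.ext hh)
      simp only [hH, Matrix.of_apply]
      have hiff : ((j : ℕ) < r + 1) ↔ ((j : ℕ) < r) := by omega
      simp only [hiff]
  have hup2 : H r = (H r).updateCol j0 (fun i => AV i j0) := by
    have hcol : (fun i => AV i j0) = fun i => H r i j0 := by
      funext i
      simp [hH, Matrix.of_apply, hj0def]
    rw [hcol, Matrix.updateCol_eq_self]
  have hdiff : (H (r + 1)).det - (H r).det
      = ((H r).updateCol j0 (fun i => AU i j0 - AV i j0)).det := by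
    have hsub : ((H r).updateCol j0 (fun i => AU i j0)).det
        = ((H r).updateCol j0 (fun i => AU i j0 - AV i j0)).det
          + ((H r).updateCol j0 (fun i => AV i j0)).det := by
      have hcomb : (fun i => AU i j0)
          = ((fun i => AU i j0 - AV i j0) + fun i => AV i j0) := by
        funext i
        simp
      rw [hcomb, Matrix.det_updateCol_add]
    calc (H (r + 1)).det - (H r).det
        = ((H r).updateCol j0 (fun i => AU i j0)).det
          - ((H r).updateCol j0 (fun i => AV i j0)).det := by
          rw [← hup1, ← hup2]
      _ = ((H r).updateCol j0 (fun i => AU i j0 - AV i j0)).det := by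
          rw [hsub]
          ring
  rw [hdiff]
  set bete : Fin (k + p ^ m - 1) → Fin (k + p ^ m - 1) → PowerSeries F :=
    fun i j => if j = j0 then 0 else (if i = j then 1 else 0) with hbete
  set ce : Fin (k + p ^ m - 1) → Fin (k + p ^ m - 1) → PowerSeries F :=
    fun i j => if j = j0 then V i j0 - MU i j0
      else -(if (j : ℕ) < r then MU i j else V i j) with hce
  have hW : (H r).updateCol j0 (fun i => AU i j0 - AV i j0)
      = Matrix.of fun i j => Polynomial.C (bete i j) + Polynomial.C (ce i j) * Polynomial.X := by
    funext i j
    rw [Matrix.updateCol_apply, Matrix.of_apply]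
    by_cases hj : j = j0
    · subst hj
      rw [if_pos rfl]
      simp only [hbete, hce, if_pos rfl]
      rw [hAU, hAV, one_sub_X_smul_apply, one_sub_X_smul_apply]
      simp only [map_neg, map_zero, map_sub]
      ring
    · rw [if_neg hj]
      simp only [hbete, hce, if_neg hj, hH, Matrix.of_apply]
      by_cases hlt : (j : ℕ) < r
      · rw [if_pos hlt, if_pos hlt, hAU, one_sub_X_smul_apply]
      · rw [if_neg hlt, if_neg hlt, hAV, one_sub_X_smul_apply]
  rw [hW]
  refine dvd_trans (pow_dvd_pow _ ?_)
    (det_coeff_dvd bete ce _ j0 (p ^ m) n ?_ ?_ ?_)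
  · have h1 : ∑ l ∈ Finset.Icc 1 (n - 1), min (l - 1) (p ^ m)
        ≤ ∑ l ∈ Finset.Icc 1 (n - 1), (l - 1) :=
      Finset.sum_le_sum fun l _ => min_le_left _ _
    have h2 : ∑ l ∈ Finset.Icc 1 (n - 1), (l - 1) = ∑ i ∈ Finset.range (n - 1), i := by
      have himg : Finset.Icc 1 (n - 1) = (Finset.range (n - 1)).image (· + 1) := by
        ext y
        simp only [Finset.mem_Icc, Finset.mem_image, Finset.mem_range]
        constructor
        · rintro ⟨h1y, h2y⟩
          exact ⟨y - 1, by omega, by omega⟩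
        · rintro ⟨a, ha, rfl⟩
          omega
      rw [himg, Finset.sum_image (by intro a _ b _ hab; beta_reduce at hab; omega)]
      simp
    omega
  · intro i
    simp [hbete]
  · intro i j hj
    simp only [hce, if_neg hj, dvd_neg]
    split_ifs
    · exact hUdvd i j
    · exact hVdvd i j
  · intro i
    simp only [hce, if_pos rfl]
    rw [show V i j0 - MU i j0 = -(MU i j0 - V i j0) by ring, dvd_neg]
    exact hdvd i j0


end DrinfeldGM
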